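/- Riemann-sum sandwich for the Gaussian-weighted sum: let n ≥ 1 be an integer and M a real number with 2 ≤ M ≤ √n. Then n·(1 − e^{−(M−2)²/(2n)}) − 1 ≤ ∑_{k=0}^{⌊M⌋ − 1} k·e^{−k²/(2n)} ≤ n·(1 − e^{−M²/(2n)}). -/

import Mathlib

open Real Finset

private lemma gauss_hasDeriv (n : ℕ) (hn : 1 ≤ n) (x : ℝ) :
    HasDerivAt (fun y : ℝ => -(n : ℝ) * Real.exp (-(y ^ 2) / (2 * n)))
      (x * Real.exp (-(x ^ 2) / (2 * n))) x := by
  have hn0 : (n : ℝ) ≠ 0 := by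
    have : (0:ℝ) < n := by exact_mod_cast hn
    linarith
  have h1 : HasDerivAt (fun y : ℝ => -(y ^ 2) / (2 * n)) (-(2 * x) / (2 * n)) x := by
    simpa using ((hasDerivAt_pow 2 x).neg).div_const (2 * n)
  have h2 := (Real.hasDerivAt_exp (-(x ^ 2) / (2 * n))).comp x h1
  have h3 := h2.const_mul (-(n:ℝ))
  convert h3 using 1
  · rfl
  · rfl
  · rfl
  field_simp

private lemma gauss_cont (n : ℕ) :
    Continuous (fun x : ℝ => x * Real.exp (-(x ^ 2) / (2 * n))) := by fun_prop

private lemma gauss_integral (n : ℕ) (hn : 1 ≤ n) (a b : ℝ) :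
    ∫ x in a..b, x * Real.exp (-(x ^ 2) / (2 * n))
      = -(n : ℝ) * Real.exp (-(b ^ 2) / (2 * n)) - -(n : ℝ) * Real.exp (-(a ^ 2) / (2 * n)) :=
  intervalIntegral.integral_eq_sub_of_hasDerivAt (fun x _ => gauss_hasDeriv n hn x)
    ((gauss_cont n).intervalIntegrable a b)

private lemma gauss_mono (n : ℕ) (hn : 1 ≤ n) {a b : ℝ} (ha : 0 ≤ a) (hab : a ≤ b)
    (hb : b ≤ Real.sqrt n) :
    a * Real.exp (-(a ^ 2) / (2 * n)) ≤ b * Real.exp (-(b ^ 2) / (2 * n)) := by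
  have hn0 : (0:ℝ) < n := by exact_mod_cast hn
  have hb0 : 0 ≤ b := le_trans ha hab
  have hb2 : b ^ 2 ≤ n := by
    have h := Real.sq_sqrt hn0.le
    nlinarith [Real.sqrt_nonneg (n:ℝ)]
  set t : ℝ := (b ^ 2 - a ^ 2) / (2 * n) with ht
  have ht0 : 0 ≤ t := by
    apply div_nonneg _ (by linarith)
    nlinarith
  have ht1 : t ≤ 1 / 2 := by
    rw [ht, div_le_iff₀ (by linarith)]
    nlinarith
  have hexp : Real.exp t * (1 - t) ≤ 1 := by
    have h1 : 1 - t ≤ Real.exp (-t) := by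
      have := Real.add_one_le_exp (-t); linarith
    calc Real.exp t * (1 - t) ≤ Real.exp t * Real.exp (-t) :=
          mul_le_mul_of_nonneg_left h1 (Real.exp_pos t).le
      _ = 1 := by rw [← Real.exp_add]; simp
  have hblow : a ≤ b * (1 - t) := by
    rw [ht, ← sub_nonneg]
    have h2n : (0:ℝ) < 2 * n := by linarith
    have hrw : b * (1 - (b ^ 2 - a ^ 2) / (2 * n)) - a
        = (b * (2 * n) - b * (b ^ 2 - a ^ 2) - a * (2 * n)) / (2 * n) := by
      field_simp
    rw [hrw]
    apply div_nonneg _ h2n.le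
    have hfac : 0 ≤ 2 * (n:ℝ) - b * (b + a) := by nlinarith
    nlinarith [mul_nonneg (sub_nonneg.2 hab) hfac]
  have key : a * Real.exp t ≤ b := by
    have h1 : a * Real.exp t * (1 - t) ≤ a := by
      calc a * Real.exp t * (1 - t) = a * (Real.exp t * (1 - t)) := by ring
        _ ≤ a * 1 := mul_le_mul_of_nonneg_left hexp ha
        _ = a := mul_one a
    have h2 : 0 < 1 - t := by linarith
    nlinarith [mul_le_mul_of_nonneg_right (le_trans h1 hblow) h2.le]
  have hsplit : -(a ^ 2) / (2 * n) = t + -(b ^ 2) / (2 * n) := by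
    rw [ht]; field_simp; ring
  rw [hsplit, Real.exp_add]
  calc a * (Real.exp t * Real.exp (-(b ^ 2) / (2 * n)))
      = (a * Real.exp t) * Real.exp (-(b ^ 2) / (2 * n)) := by ring
    _ ≤ b * Real.exp (-(b ^ 2) / (2 * n)) :=
        mul_le_mul_of_nonneg_right key (Real.exp_pos _).le

private lemma gauss_step (n : ℕ) (hn : 1 ≤ n) (a : ℝ) (ha : 0 ≤ a)
    (ha1 : a + 1 ≤ Real.sqrt n) :
    a * Real.exp (-(a ^ 2) / (2 * n))
      ≤ -(n : ℝ) * Real.exp (-((a + 1) ^ 2) / (2 * n)) - -(n : ℝ) * Real.exp (-(a ^ 2) / (2 * n))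
    ∧ -(n : ℝ) * Real.exp (-((a + 1) ^ 2) / (2 * n)) - -(n : ℝ) * Real.exp (-(a ^ 2) / (2 * n))
      ≤ (a + 1) * Real.exp (-((a + 1) ^ 2) / (2 * n)) := by
  rw [← gauss_integral n hn a (a + 1)]
  have hconst : ∀ c : ℝ, (∫ _ in a..(a + 1), c) = c := by
    intro c; rw [intervalIntegral.integral_const]; simp
  constructor
  · rw [← hconst (a * Real.exp (-(a ^ 2) / (2 * n)))]
    apply intervalIntegral.integral_mono_on (by linarith) (intervalIntegrable_const)
      ((gauss_cont n).intervalIntegrable _ _)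
    intro x hx
    exact gauss_mono n hn ha hx.1 (le_trans hx.2 ha1)
  · rw [← hconst ((a + 1) * Real.exp (-((a + 1) ^ 2) / (2 * n)))]
    apply intervalIntegral.integral_mono_on (by linarith)
      ((gauss_cont n).intervalIntegrable _ _) (intervalIntegrable_const)
    intro x hx
    exact gauss_mono n hn (le_trans ha hx.1) hx.2 ha1

/-- **Riemann-sum sandwich for the Gaussian-weighted sum.** For an integer `n ≥ 1` and
a real `2 ≤ M ≤ √n`,
`n(1 - e^{-(M-2)²/(2n)}) - 1 ≤ ∑_{k=0}^{⌊M⌋-1} k e^{-k²/(2n)} ≤ n(1 - e^{-M²/(2n)})`. -/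
theorem gaussian_riemann_sandwich
    (n : ℕ) (hn : 1 ≤ n) (M : ℝ) (hM2 : 2 ≤ M) (hMn : M ≤ Real.sqrt n) :
    (n : ℝ) * (1 - Real.exp (-((M - 2) ^ 2) / (2 * n))) - 1
        ≤ ∑ k ∈ Finset.range (Nat.floor M),
            (k : ℝ) * Real.exp (-((k : ℝ) ^ 2) / (2 * n))
    ∧ ∑ k ∈ Finset.range (Nat.floor M),
          (k : ℝ) * Real.exp (-((k : ℝ) ^ 2) / (2 * n))
        ≤ (n : ℝ) * (1 - Real.exp (-(M ^ 2) / (2 * n))) := by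
  have hn0 : (0:ℝ) < n := by exact_mod_cast hn
  set m : ℕ := Nat.floor M with hm
  have hM0 : (0:ℝ) ≤ M := by linarith
  have hm2 : 2 ≤ m := Nat.le_floor (by exact_mod_cast hM2)
  have hmM : (m : ℝ) ≤ M := Nat.floor_le hM0
  have hMm : M < (m : ℝ) + 1 := Nat.lt_floor_add_one M
  have hmsqrt : (m : ℝ) ≤ Real.sqrt n := hmM.trans hMn
  set G : ℕ → ℝ := fun k => -(n : ℝ) * Real.exp (-((k : ℝ) ^ 2) / (2 * n)) with hG
  have hG0 : G 0 = -(n : ℝ) := by simp [hG]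
  -- upper bound
  have hup : ∑ k ∈ Finset.range m, (k : ℝ) * Real.exp (-((k : ℝ) ^ 2) / (2 * n))
      ≤ G m - G 0 := by
    rw [← Finset.sum_range_sub G]
    apply Finset.sum_le_sum
    intro k hk
    have hk1 : (k : ℝ) + 1 ≤ Real.sqrt n := by
      have : (k : ℝ) + 1 ≤ (m : ℝ) := by
        exact_mod_cast Nat.succ_le_of_lt (Finset.mem_range.mp hk)
      linarith
    have := (gauss_step n hn (k : ℝ) (Nat.cast_nonneg k) hk1).1
    convert this using 3 <;> push_cast <;> rfl
  -- lower bound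
  obtain ⟨p, hp⟩ : ∃ p, m = p + 1 := ⟨m - 1, by omega⟩
  have hp1 : 1 ≤ p := by omega
  have hlo : G p - G 0 ≤ ∑ k ∈ Finset.range m, (k : ℝ) * Real.exp (-((k : ℝ) ^ 2) / (2 * n)) := by
    rw [hp, Finset.sum_range_succ']
    simp only [Nat.cast_zero, zero_mul, add_zero]
    rw [← Finset.sum_range_sub G]
    apply Finset.sum_le_sum
    intro j hj
    have hj1 : (j : ℝ) + 1 ≤ Real.sqrt n := by
      have : (j : ℝ) + 1 ≤ (p : ℝ) := by
        exact_mod_cast Nat.succ_le_of_lt (Finset.mem_range.mp hj)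
      have hpm : (p : ℝ) ≤ (m : ℝ) := by exact_mod_cast Nat.le_of_lt (by omega)
      linarith
    have := (gauss_step n hn (j : ℝ) (Nat.cast_nonneg j) hj1).2
    convert this using 3 <;> push_cast <;> rfl
  constructor
  · refine le_trans ?_ hlo
    rw [hG0, hG]
    have hMp : (M - 2) ^ 2 ≤ (p : ℝ) ^ 2 := by
      have hpm : (p : ℝ) = (m : ℝ) - 1 := by rw [hp]; push_cast; ring
      nlinarith
    have hexp : Real.exp (-((p : ℝ) ^ 2) / (2 * n)) ≤ Real.exp (-((M - 2) ^ 2) / (2 * n)) := by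
      apply Real.exp_le_exp.mpr
      apply (div_le_div_iff_of_pos_right (show (0:ℝ) < 2*n by linarith)).mpr
      linarith
    nlinarith
  · refine hup.trans ?_
    rw [hG0, hG]
    have hMmsq : (m : ℝ) ^ 2 ≤ M ^ 2 := by nlinarith [(Nat.cast_nonneg m : (0:ℝ) ≤ (m:ℝ))]
    have hexp : Real.exp (-(M ^ 2) / (2 * n)) ≤ Real.exp (-((m : ℝ) ^ 2) / (2 * n)) := by
      apply Real.exp_le_exp.mpr
      apply (div_le_div_iff_of_pos_right (show (0:ℝ) < 2*n by linarith)).mpr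
      linarith
    nlinarith
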